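/- Let S be a finite-dimensional operator system and S₀ ⊆ S an operator subsystem. Then the adjoint iᵈ : Sᵈ → S₀ᵈ of the inclusion i : S₀ ↪ S is a quotient map of operator systems, and its kernel is a null subspace of Sᵈ. -/

import Mathlib

open scoped ComplexOrder TensorProduct

noncomputable section

/-- A family of matrix cones over `V`, one in each matrix level `Mₙ(V)`. -/
def ConeFam (V : Type*) : Type _ :=
  ∀ n : ℕ, Set (Matrix (Fin n) (Fin n) V)

/-- Entrywise application of a linear map to a matrix (the `n`-th amplification). -/
def mmap {V W : Type*} [AddCommGroup V] [Module ℂ V] [AddCommGroup W] [Module ℂ W]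
    {n : ℕ} (φ : V →ₗ[ℂ] W) (M : Matrix (Fin n) (Fin n) V) : Matrix (Fin n) (Fin n) W :=
  M.map fun v => φ v

/-- Scalar congruence `A⋆ M A` of a `V`-valued matrix by a scalar matrix. -/
def matCongr {V : Type*} [AddCommGroup V] [Module ℂ V] {m n : ℕ}
    (A : Matrix (Fin m) (Fin n) ℂ) (M : Matrix (Fin m) (Fin m) V) :
    Matrix (Fin n) (Fin n) V :=
  Matrix.of fun i j => ∑ k, ∑ l, (star (A k i) * A l j) • M k l

/-- The diagonal matrix with constant diagonal entry `e`. -/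
def unitMat {V : Type*} [AddCommGroup V] [Module ℂ V] (e : V) (n : ℕ) :
    Matrix (Fin n) (Fin n) V :=
  Matrix.of fun i j => if i = j then e else 0

/-- An abstract operator system: a matrix ordered `*`-vector space together with an
Archimedean matrix order unit (Choi–Effros axioms). -/
structure OSStruct (V : Type*) [AddCommGroup V] [Module ℂ V]
    [StarAddMonoid V] [StarModule ℂ V] where
  pos : ConeFam V
  unit : V
  unit_sa : star unit = unit
  pos_sa : ∀ {n : ℕ} {M : Matrix (Fin n) (Fin n) V}, M ∈ pos n → M.conjTranspose = M
  pos_add : ∀ {n : ℕ} {M N : Matrix (Fin n) (Fin n) V}, M ∈ pos n → N ∈ pos n → M + N ∈ pos n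
  pos_smul : ∀ {n : ℕ} (r : ℝ) {M : Matrix (Fin n) (Fin n) V},
      0 ≤ r → M ∈ pos n → (r : ℂ) • M ∈ pos n
  pos_strict : ∀ {n : ℕ} {M : Matrix (Fin n) (Fin n) V}, M ∈ pos n → -M ∈ pos n → M = 0
  pos_congr : ∀ {m n : ℕ} (A : Matrix (Fin m) (Fin n) ℂ) {M : Matrix (Fin m) (Fin m) V},
      M ∈ pos m → matCongr A M ∈ pos n
  unit_pos : ∀ n, unitMat unit n ∈ pos n
  orderUnit : ∀ {n : ℕ} (M : Matrix (Fin n) (Fin n) V), M.conjTranspose = M →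
      ∃ r : ℝ, 0 < r ∧ (r : ℂ) • unitMat unit n + M ∈ pos n
  archimedean : ∀ {n : ℕ} (M : Matrix (Fin n) (Fin n) V),
      (∀ ε : ℝ, 0 < ε → (ε : ℂ) • unitMat unit n + M ∈ pos n) → M ∈ pos n

section Maps
variable {V W : Type*} [AddCommGroup V] [Module ℂ V] [AddCommGroup W] [Module ℂ W]

/-- `k`-positivity of a linear map with respect to given matrix cone families. -/
def osKPos (C : ConeFam V) (D : ConeFam W) (k : ℕ) (φ : V →ₗ[ℂ] W) : Prop :=
  ∀ M ∈ C k, mmap φ M ∈ D k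

/-- Complete positivity. -/
def osCP (C : ConeFam V) (D : ConeFam W) (φ : V →ₗ[ℂ] W) : Prop :=
  ∀ k, osKPos C D k φ

/-- Unital complete positivity. -/
def osUCP (C : ConeFam V) (e : V) (D : ConeFam W) (f : W) (φ : V →ₗ[ℂ] W) : Prop :=
  osCP C D φ ∧ φ e = f

/-- Complete order embedding. -/
def osCOEmbedding (C : ConeFam V) (D : ConeFam W) (φ : V →ₗ[ℂ] W) : Prop :=
  Function.Injective φ ∧ osCP C D φ ∧
    ∀ (n : ℕ) (M : Matrix (Fin n) (Fin n) V), mmap φ M ∈ D n → M ∈ C n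

/-- Operator system quotient map: a surjective completely positive map such that the
induced map on the quotient by its kernel is a complete order isomorphism, expressed
via the standard `ε`-lifting characterisation of positive matrices. -/
def osQuotientMap (C : ConeFam V) (D : ConeFam W) (f : W) (φ : V →ₗ[ℂ] W) : Prop :=
  Function.Surjective φ ∧ osCP C D φ ∧
    ∀ (n : ℕ), ∀ N ∈ D n, ∀ ε : ℝ, 0 < ε →
      ∃ M ∈ C n, mmap φ M = N + (ε : ℂ) • unitMat f n

/-- Positivity of a single element (as a `1 × 1` matrix). -/
def posElem (C : ConeFam V) (v : V) : Prop :=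
  (Matrix.of (fun _ _ => v) : Matrix (Fin 1) (Fin 1) V) ∈ C 1

/-- A state: a unital positive linear functional. -/
def osState (C : ConeFam V) (e : V) (f : Module.Dual ℂ V) : Prop :=
  f e = 1 ∧ ∀ v, posElem C v → 0 ≤ f v

/-- A faithful state. -/
def osFaithfulState (C : ConeFam V) (e : V) (f : Module.Dual ℂ V) : Prop :=
  osState C e f ∧ ∀ v, posElem C v → f v = 0 → v = 0

end Maps

section Dual
variable {V : Type*} [AddCommGroup V] [Module ℂ V]

/-- Flatten a matrix of scalar matrices to a scalar matrix over the product index. -/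
def blockify {n : ℕ} {ι : Type*} (M : Matrix (Fin n) (Fin n) (Matrix ι ι ℂ)) :
    Matrix (Fin n × ι) (Fin n × ι) ℂ :=
  Matrix.of fun p q => M p.1 q.1 p.2 q.2

/-- The matrix-valued map associated with a matrix of functionals. -/
def matValued {n : ℕ} (F : Matrix (Fin n) (Fin n) (Module.Dual ℂ V)) :
    V →ₗ[ℂ] Matrix (Fin n) (Fin n) ℂ where
  toFun v := Matrix.of fun i j => F i j v
  map_add' a b := by ext i j; simp
  map_smul' c a := by ext i j; simp

/-- Complete positivity of a map into a matrix algebra `Mₖ(ℂ)`. -/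
def CPIntoMat (C : ConeFam V) {k : ℕ} (φ : V →ₗ[ℂ] Matrix (Fin k) (Fin k) ℂ) : Prop :=
  ∀ (n : ℕ), ∀ M ∈ C n, (blockify (mmap φ M)).PosSemidef

/-- The dual matrix ordering on `Sᵈ`: a matrix of functionals is positive iff the
associated matrix-valued map is completely positive. -/
def osDualCone (C : ConeFam V) : ConeFam (Module.Dual ℂ V) :=
  fun _ => { F | CPIntoMat C (matValued F) }

/-- The induced (subsystem) matrix ordering on a subspace. -/
def osSubCone (C : ConeFam V) (S₀ : Submodule ℂ V) : ConeFam S₀ :=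
  fun n => { M | mmap S₀.subtype M ∈ C n }

end Dual

/-- A null subspace: a `*`-closed subspace containing no nonzero positive element. -/
def IsNullSubspace {V : Type*} [AddCommGroup V] [Module ℂ V] [StarAddMonoid V]
    (C : ConeFam V) (J : Submodule ℂ V) : Prop :=
  (∀ v ∈ J, star v ∈ J) ∧ ∀ v ∈ J, posElem C v → v = 0

/-- The canonical involution on the dual space: `f⋆ (s) = conj (f (s⋆))`. -/
def dstar {V : Type*} [AddCommGroup V] [Module ℂ V] [StarAddMonoid V] [StarModule ℂ V]
    (f : Module.Dual ℂ V) : Module.Dual ℂ V where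
  toFun v := starRingEnd ℂ (f (star v))
  map_add' a b := by simp
  map_smul' c a := by
    simp only [star_smul, LinearMap.map_smul, smul_eq_mul, map_mul, RingHom.id_apply,
      starRingEnd_apply, star_star]

section TensorDefs
variable {V W : Type*} [AddCommGroup V] [Module ℂ V] [AddCommGroup W] [Module ℂ W]

/-- Kronecker product of scalar matrices. -/
def osKron {k m : ℕ} (X : Matrix (Fin k) (Fin k) ℂ) (Y : Matrix (Fin m) (Fin m) ℂ) :
    Matrix (Fin k × Fin m) (Fin k × Fin m) ℂ :=
  Matrix.of fun p q => X p.1 q.1 * Y p.2 q.2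

/-- The map `φ ⊗ ψ : V ⊗ W → M_k ⊗ M_m = M_{km}`. -/
def osFuse {k m : ℕ} (φ : V →ₗ[ℂ] Matrix (Fin k) (Fin k) ℂ)
    (ψ : W →ₗ[ℂ] Matrix (Fin m) (Fin m) ℂ) :
    V ⊗[ℂ] W →ₗ[ℂ] Matrix (Fin k × Fin m) (Fin k × Fin m) ℂ :=
  TensorProduct.lift (LinearMap.mk₂ ℂ (fun v w => osKron (φ v) (ψ w))
    (fun v v' w => by ext p q; simp [osKron, add_mul])
    (fun c v w => by ext p q; simp [osKron, smul_eq_mul]; ring)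
    (fun v w w' => by ext p q; simp [osKron, mul_add])
    (fun c v w => by ext p q; simp [osKron, smul_eq_mul]; ring))

/-- The minimal operator system tensor cone. -/
def osMin (C : ConeFam V) (e : V) (D : ConeFam W) (f : W) : ConeFam (V ⊗[ℂ] W) :=
  fun n => { U | ∀ (k m : ℕ) (φ : V →ₗ[ℂ] Matrix (Fin k) (Fin k) ℂ)
      (ψ : W →ₗ[ℂ] Matrix (Fin m) (Fin m) ℂ),
      CPIntoMat C φ → φ e = 1 → CPIntoMat D ψ → ψ f = 1 →
      (blockify (mmap (osFuse φ ψ) U)).PosSemidef }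

/-- The elementary tensor `P ⊗ Q` of a `V`-valued and a `W`-valued matrix. -/
def tensorElemMat {k m : ℕ} (P : Matrix (Fin k) (Fin k) V) (Q : Matrix (Fin m) (Fin m) W) :
    Matrix (Fin (k * m)) (Fin (k * m)) (V ⊗[ℂ] W) :=
  Matrix.of fun i j =>
    P (finProdFinEquiv.symm i).1 (finProdFinEquiv.symm j).1 ⊗ₜ[ℂ]
      Q (finProdFinEquiv.symm i).2 (finProdFinEquiv.symm j).2

/-- The cones `Dₙ^max` of the maximal tensor product. -/
def osMaxD (C : ConeFam V) (D : ConeFam W) : ConeFam (V ⊗[ℂ] W) :=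
  fun n => { U | ∃ (k m : ℕ) (P : Matrix (Fin k) (Fin k) V) (Q : Matrix (Fin m) (Fin m) W)
      (A : Matrix (Fin (k * m)) (Fin n) ℂ),
      P ∈ C k ∧ Q ∈ D m ∧ U = matCongr A (tensorElemMat P Q) }

/-- The maximal operator system tensor cone (Archimedeanization of `Dₙ^max`). -/
def osMax (C : ConeFam V) (e : V) (D : ConeFam W) (f : W) : ConeFam (V ⊗[ℂ] W) :=
  fun n => { U | ∀ ε : ℝ, 0 < ε → (ε : ℂ) • unitMat (e ⊗ₜ[ℂ] f) n + U ∈ osMaxD C D n }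

end TensorDefs

/-- The canonical matrix ordering of a C*-algebra: `M ≥ 0` iff `M = N⋆ N`. -/
def cstarPos (A : Type*) [Ring A] [StarRing A] [Algebra ℂ A] : ConeFam A :=
  fun n => { M | ∃ N : Matrix (Fin n) (Fin n) A, M = N.conjTranspose * N }

/-- The (local) lifting property of a finite dimensional operator system: every ucp map
into a quotient C*-algebra `A/I` (presented by a surjective unital `*`-homomorphism)
admits a completely positive lift. -/
def osLiftingProperty {V : Type*} [AddCommGroup V] [Module ℂ V] (C : ConeFam V) (e : V) :
    Prop :=
  ∀ (A B : Type) [CStarAlgebra A] [CStarAlgebra B] (q : A →⋆ₐ[ℂ] B),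
    Function.Surjective (⇑q) →
    ∀ φ : V →ₗ[ℂ] B, osUCP C e (cstarPos B) 1 φ →
      ∃ ψ : V →ₗ[ℂ] A, osCP C (cstarPos A) ψ ∧ q.toAlgHom.toLinearMap ∘ₗ ψ = φ

/-- Exactness of a (finite dimensional) operator system: for every quotient of C*-algebras
the natural map `(S ⊗_min A)/(S ⊗ I) → S ⊗_min (A/I)` is a complete order isomorphism. -/
def osExact {V : Type*} [AddCommGroup V] [Module ℂ V] (C : ConeFam V) (e : V) : Prop :=
  ∀ (A B : Type) [CStarAlgebra A] [CStarAlgebra B] (q : A →⋆ₐ[ℂ] B),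
    Function.Surjective (⇑q) →
    ∀ (n : ℕ) (U : Matrix (Fin n) (Fin n) (V ⊗[ℂ] B)),
      U ∈ osMin C e (cstarPos B) (1 : B) n ↔
        ∀ ε : ℝ, 0 < ε → ∃ P ∈ osMin C e (cstarPos A) (1 : A) n,
          mmap (LinearMap.lTensor V q.toAlgHom.toLinearMap) P
            = U + (ε : ℂ) • unitMat (e ⊗ₜ[ℂ] (1 : B)) n

/-- Kirchberg's local lifting property (LLP) of a unital C*-algebra. -/
def cstarLLP (U : Type*) [CStarAlgebra U] : Prop :=
  ∀ (A B : Type) [CStarAlgebra A] [CStarAlgebra B] (q : A →⋆ₐ[ℂ] B),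
    Function.Surjective (⇑q) →
    ∀ (θ : U →ₗ[ℂ] B), osUCP (cstarPos U) 1 (cstarPos B) 1 θ →
    ∀ (F : Submodule ℂ U), FiniteDimensional ℂ F → (∀ x ∈ F, star x ∈ F) →
    ∀ (h1 : (1 : U) ∈ F),
      ∃ ψ : (F : Type _) →ₗ[ℂ] A,
        osUCP (osSubCone (cstarPos U) F) ⟨1, h1⟩ (cstarPos A) 1 ψ ∧
        q.toAlgHom.toLinearMap ∘ₗ ψ = θ ∘ₗ F.subtype

end

section Statement6Aux

variable {V : Type} [AddCommGroup V] [Module ℂ V] [StarAddMonoid V] [StarModule ℂ V]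

lemma mmap_apply {W : Type} [AddCommGroup W] [Module ℂ W] {n : ℕ} (φ : V →ₗ[ℂ] W)
    (M : Matrix (Fin n) (Fin n) V) (i j : Fin n) : mmap φ M i j = φ (M i j) := rfl

lemma blockify_apply {n : ℕ} {ι : Type} (M : Matrix (Fin n) (Fin n) (Matrix ι ι ℂ))
    (p q : Fin n × ι) : blockify M p q = M p.1 q.1 p.2 q.2 := rfl

lemma matValued_apply {W : Type} [AddCommGroup W] [Module ℂ W] {n : ℕ}
    (F : Matrix (Fin n) (Fin n) (Module.Dual ℂ W)) (v : W) (i j : Fin n) :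
    matValued F v i j = F i j v := rfl

lemma matCongr_apply {m n : ℕ} (A : Matrix (Fin m) (Fin n) ℂ)
    (M : Matrix (Fin m) (Fin m) V) (i j : Fin n) :
    matCongr A M i j = ∑ k, ∑ l, (star (A k i) * A l j) • M k l := rfl

/-- posElem from order unit at level one. -/
lemma posElem_orderUnit (S : OSStruct V) {h : V} (hh : star h = h) :
    ∃ r : ℝ, 0 < r ∧ posElem S.pos ((r : ℂ) • S.unit + h) := by
  obtain ⟨r, hr, hpos⟩ := S.orderUnit (n := 1) (Matrix.of fun _ _ => h)
    (by ext i j; simp [Matrix.conjTranspose_apply, hh])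
  refine ⟨r, hr, ?_⟩
  unfold posElem
  convert hpos using 1
  ext i j
  have hij : i = j := Subsingleton.elim i j
  subst hij
  simp [unitMat, Matrix.add_apply]

lemma posElem_smul_unit (S : OSStruct V) {r : ℝ} (hr : 0 ≤ r) :
    posElem S.pos ((r : ℂ) • S.unit) := by
  have := S.pos_smul r hr (S.unit_pos 1)
  unfold posElem
  convert this using 1
  ext i j
  have hij : i = j := Subsingleton.elim i j
  subst hij
  simp [unitMat]

/-- Diagonal entries of positive matrices are positive elements. -/
lemma posElem_diag (S : OSStruct V) {n : ℕ} {M : Matrix (Fin n) (Fin n) V}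
    (hM : M ∈ S.pos n) (p : Fin n) : posElem S.pos (M p p) := by
  have := S.pos_congr (Matrix.of fun i (_ : Fin 1) => if i = p then (1 : ℂ) else 0) hM
  unfold posElem
  convert this using 1
  ext i j
  simp only [matCongr_apply, Matrix.of_apply]
  rw [Finset.sum_eq_single p, Finset.sum_eq_single p]
  · simp
  · intro b _ hb; simp [hb]
  · simp
  · intro b _ hb; simp [hb]
  · simp

end Statement6Aux
section Statement6Aux2
set_option linter.unusedSectionVars false

variable {V : Type} [AddCommGroup V] [Module ℂ V] [StarAddMonoid V] [StarModule ℂ V]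

/-- Decomposition of a vector into hermitian parts. -/
lemma herm_decomp (v : V) :
    ∃ h k : V, star h = h ∧ star k = k ∧ v = h + Complex.I • k ∧
      star v = h - Complex.I • k ∧
      h = (1/2 : ℂ) • (v + star v) ∧ k = (Complex.I/2 : ℂ) • (star v - v) := by
  refine ⟨(1/2 : ℂ) • (v + star v), (Complex.I/2 : ℂ) • (star v - v), ?_, ?_, ?_, ?_, rfl, rfl⟩
  · rw [star_smul, star_add, star_star]
    simp only [RCLike.star_def, map_div₀, map_one, map_ofNat, Complex.conj_ofReal]
    rw [add_comm]
  · rw [star_smul, star_sub, star_star]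
    simp only [RCLike.star_def, map_div₀, Complex.conj_I, map_ofNat]
    rw [neg_div, neg_smul, ← smul_neg, neg_sub]
  · rw [smul_smul]
    have : Complex.I * (Complex.I / 2) = -(1/2) := by
      rw [mul_div_assoc']
      rw [Complex.I_mul_I]
      norm_num
    rw [this]
    module
  · rw [smul_smul]
    have : Complex.I * (Complex.I / 2) = -(1/2) := by
      rw [mul_div_assoc']
      rw [Complex.I_mul_I]
      norm_num
    rw [this]
    module

/-- A positive functional is star-preserving. -/
lemma pos_functional_star (S : OSStruct V) (g : Module.Dual ℂ V)
    (hg : ∀ v, posElem S.pos v → 0 ≤ g v) :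
    ∀ v, g (star v) = starRingEnd ℂ (g v) := by
  -- first: g is real on hermitian elements
  have hunitreal : (g S.unit).im = 0 := by
    have : posElem S.pos S.unit := by
      have := S.unit_pos 1
      unfold posElem
      convert this using 1
      ext i j
      have hij : i = j := Subsingleton.elim i j
      subst hij; simp [unitMat]
    have := hg _ this
    rw [Complex.le_def] at this
    exact this.2.symm
  have hreal : ∀ h : V, star h = h → (g h).im = 0 := by
    intro h hh
    obtain ⟨r, hr, hpos⟩ := posElem_orderUnit S hh
    have h1 := hg _ hpos
    rw [Complex.le_def] at h1
    have := h1.2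
    simp only [map_add, map_smul] at this
    rw [Complex.add_im] at this
    have hsm : ((r:ℂ) • g S.unit).im = 0 := by
      simp [Complex.smul_im, hunitreal]
    rw [hsm] at this
    simpa using this.symm
  intro v
  obtain ⟨h, k, hh, hk, hv, hsv, -, -⟩ := herm_decomp v
  conv_lhs => rw [hsv]
  conv_rhs => rw [hv]
  simp only [map_add, map_sub, map_smul]
  have h1 := hreal h hh
  have h2 := hreal k hk
  apply Complex.ext <;>
    simp [Complex.add_im, Complex.add_re, Complex.sub_re, Complex.sub_im, h1, h2,
      Complex.smul_re, Complex.smul_im, Complex.conj_re, Complex.conj_im]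

end Statement6Aux2
section Statement6Aux3
set_option linter.unusedSectionVars false
set_option maxHeartbeats 1000000

variable {V : Type} [AddCommGroup V] [Module ℂ V] [StarAddMonoid V] [StarModule ℂ V]

lemma sum_swap_pairs {α : Type} [AddCommMonoid α] {k n : ℕ} (f : Fin k → Fin n → Fin k → Fin n → α) :
    ∑ i, ∑ p, ∑ l, ∑ q, f i p l q = ∑ p, ∑ q, ∑ i, ∑ l, f i p l q := by
  calc ∑ i, ∑ p, ∑ l, ∑ q, f i p l q
      = ∑ p, ∑ i, ∑ l, ∑ q, f i p l q := Finset.sum_comm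
    _ = ∑ p, ∑ i, ∑ q, ∑ l, f i p l q :=
        Finset.sum_congr rfl fun p _ => Finset.sum_congr rfl fun i _ => Finset.sum_comm
    _ = ∑ p, ∑ q, ∑ i, ∑ l, f i p l q :=
        Finset.sum_congr rfl fun p _ => Finset.sum_comm

/-- The fundamental quadratic form identity. -/
lemma quad_eq {n k : ℕ} (φ : V →ₗ[ℂ] Matrix (Fin n) (Fin n) ℂ)
    (M : Matrix (Fin k) (Fin k) V) (ξ : Fin k × Fin n → ℂ) :
    dotProduct (star ξ) (Matrix.mulVec (blockify (mmap φ M)) ξ)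
      = ∑ p : Fin n, ∑ q : Fin n,
          φ (matCongr (Matrix.of fun i r => ξ (i, r)) M p q) p q := by
  have lhs : dotProduct (star ξ) (Matrix.mulVec (blockify (mmap φ M)) ξ)
      = ∑ i, ∑ p, ∑ l, ∑ q,
          starRingEnd ℂ (ξ (i, p)) * (φ (M i l) p q * ξ (l, q)) := by
    simp only [dotProduct, Matrix.mulVec, Pi.star_apply, blockify_apply,
      mmap_apply, RCLike.star_def, Finset.mul_sum]
    rw [Fintype.sum_prod_type]
    refine Finset.sum_congr rfl fun i _ => Finset.sum_congr rfl fun p _ => ?_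
    rw [Fintype.sum_prod_type]
  have rhs : ∀ p q : Fin n, φ (matCongr (Matrix.of fun i r => ξ (i, r)) M p q) p q
      = ∑ i, ∑ l, (starRingEnd ℂ (ξ (i, p)) * ξ (l, q)) * φ (M i l) p q := by
    intro p q
    simp only [matCongr_apply, Matrix.of_apply, map_sum, map_smul, Matrix.sum_apply,
      Matrix.smul_apply, smul_eq_mul, RCLike.star_def]
  rw [lhs]
  rw [sum_swap_pairs (f := fun i p l q => starRingEnd ℂ (ξ (i, p)) * (φ (M i l) p q * ξ (l, q)))]
  refine Finset.sum_congr rfl fun p _ => Finset.sum_congr rfl fun q _ => ?_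
  rw [rhs p q]
  refine Finset.sum_congr rfl fun i _ => Finset.sum_congr rfl fun l _ => ?_
  ring

end Statement6Aux3
section Statement6Aux4
set_option linter.unusedSectionVars false
set_option maxHeartbeats 1000000

variable {V : Type} [AddCommGroup V] [Module ℂ V] [StarAddMonoid V] [StarModule ℂ V]

lemma sum_dual_nonneg (S : OSStruct V) {S₀ : Submodule ℂ V} {n : ℕ}
    (N : Matrix (Fin n) (Fin n) (Module.Dual ℂ S₀))
    (hN : CPIntoMat (osSubCone S.pos S₀) (matValued N))
    (Q : Matrix (Fin n) (Fin n) S₀) (hQ : Q ∈ osSubCone S.pos S₀ n) :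
    0 ≤ ∑ i, ∑ j, N i j (Q i j) := by
  have h := (hN n Q hQ).dotProduct_mulVec_nonneg (fun z => if z.1 = z.2 then 1 else 0)
  have key : dotProduct (star fun z : Fin n × Fin n => if z.1 = z.2 then (1:ℂ) else 0)
      (Matrix.mulVec (blockify (mmap (matValued N) Q)) (fun z => if z.1 = z.2 then (1:ℂ) else 0))
      = ∑ i, ∑ j, N i j (Q i j) := by
    simp only [dotProduct, Matrix.mulVec, Pi.star_apply, blockify_apply, mmap_apply,
      matValued_apply, Fintype.sum_prod_type, RCLike.star_def, apply_ite (starRingEnd ℂ),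
      map_one, map_zero, ite_mul, one_mul,
      zero_mul, mul_ite, mul_one, mul_zero, Finset.sum_ite_eq, Finset.sum_ite_eq',
      Finset.mem_univ, if_true]
    rfl
  rw [key] at h
  exact h

lemma matValued_herm_entry (S : OSStruct V) {S₀ : Submodule ℂ V} {n : ℕ}
    (N : Matrix (Fin n) (Fin n) (Module.Dual ℂ S₀))
    (hN : CPIntoMat (osSubCone S.pos S₀) (matValued N))
    (y : S₀) (hy : posElem S.pos (y : V)) (p q : Fin n) :
    starRingEnd ℂ (N q p y) = N p q y := by
  have h1 : (Matrix.of fun _ _ => y : Matrix (Fin 1) (Fin 1) S₀) ∈ osSubCone S.pos S₀ 1 := hy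
  have hherm := (hN 1 _ h1).1
  have h2 := congrFun (congrFun hherm ((0 : Fin 1), p)) ((0 : Fin 1), q)
  rw [Matrix.conjTranspose_apply] at h2
  exact h2

lemma matValued_herm (S : OSStruct V) {S₀ : Submodule ℂ V} (hunit : S.unit ∈ S₀) {n : ℕ}
    (N : Matrix (Fin n) (Fin n) (Module.Dual ℂ S₀))
    (hN : CPIntoMat (osSubCone S.pos S₀) (matValued N))
    (x : S₀) (hx : star (x : V) = x) (p q : Fin n) :
    starRingEnd ℂ (N q p x) = N p q x := by
  obtain ⟨r, hr, hpos⟩ := posElem_orderUnit S hx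
  have hy1m : (r : ℂ) • S.unit + (x : V) ∈ S₀ := S₀.add_mem (S₀.smul_mem _ hunit) x.2
  have hy2m : (r : ℂ) • S.unit ∈ S₀ := S₀.smul_mem _ hunit
  have hx12 : x = (⟨_, hy1m⟩ : S₀) - ⟨_, hy2m⟩ := by
    apply Subtype.ext; simp
  have e1 := matValued_herm_entry S N hN ⟨_, hy1m⟩ hpos p q
  have e2 := matValued_herm_entry S N hN ⟨_, hy2m⟩ (posElem_smul_unit S hr.le) p q
  rw [hx12]
  simp only [map_sub, e1, e2]

lemma matValued_starpres (S : OSStruct V) {S₀ : Submodule ℂ V} (hunit : S.unit ∈ S₀)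
    (hstar : ∀ v ∈ S₀, star v ∈ S₀) {n : ℕ}
    (N : Matrix (Fin n) (Fin n) (Module.Dual ℂ S₀))
    (hN : CPIntoMat (osSubCone S.pos S₀) (matValued N))
    (v : S₀) (p q : Fin n) :
    N q p ⟨star (v : V), hstar _ v.2⟩ = starRingEnd ℂ (N p q v) := by
  obtain ⟨h, k, hh, hk, hv, hsv, hhf, hkf⟩ := herm_decomp (v : V)
  have hhm : h ∈ S₀ := by
    rw [hhf]; exact S₀.smul_mem _ (S₀.add_mem v.2 (hstar _ v.2))
  have hkm : k ∈ S₀ := by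
    rw [hkf]; exact S₀.smul_mem _ (S₀.sub_mem (hstar _ v.2) v.2)
  have hveq : v = (⟨h, hhm⟩ : S₀) + Complex.I • ⟨k, hkm⟩ := by
    apply Subtype.ext; simpa using hv
  have hsveq : (⟨star (v : V), hstar _ v.2⟩ : S₀)
      = (⟨h, hhm⟩ : S₀) - Complex.I • ⟨k, hkm⟩ := by
    apply Subtype.ext; simpa using hsv
  have e1 := matValued_herm S hunit N hN ⟨h, hhm⟩ hh q p
  have e2 := matValued_herm S hunit N hN ⟨k, hkm⟩ hk q p
  rw [hsveq]
  conv_rhs => rw [hveq]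
  simp only [map_add, map_sub, map_smul, smul_eq_mul, map_mul, Complex.conj_I]
  rw [← e1, ← e2]
  ring

end Statement6Aux4
section Statement6Aux5
set_option linter.unusedSectionVars false
set_option maxHeartbeats 1000000

variable {V : Type} [AddCommGroup V] [Module ℂ V] [StarAddMonoid V] [StarModule ℂ V]

lemma unitMat_herm (S : OSStruct V) (n : ℕ) :
    (unitMat S.unit n).conjTranspose = unitMat S.unit n := by
  ext i j
  simp only [Matrix.conjTranspose_apply, unitMat, Matrix.of_apply]
  by_cases h : i = j
  · subst h; simp [S.unit_sa]
  · rw [if_neg h, if_neg (Ne.symm h), star_zero]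

/-- Riesz extension applied to the hermitian part of `Mₙ(V)`. -/
lemma riesz_for_os (S : OSStruct V) (S₀ : Submodule ℂ V) (hunit : S.unit ∈ S₀)
    (n : ℕ) (sfun : Matrix (Fin n) (Fin n) V →ₗ[ℂ] ℂ)
    (hpos : ∀ P : Matrix (Fin n) (Fin n) V, (∀ i j, P i j ∈ S₀) → P ∈ S.pos n →
      0 ≤ (sfun P).re) :
    ∃ g : Matrix (Fin n) (Fin n) V → ℝ,
      (∀ P Q, P.conjTranspose = P → Q.conjTranspose = Q → g (P + Q) = g P + g Q) ∧
      (∀ (r : ℝ) (P), P.conjTranspose = P → g ((r : ℂ) • P) = r * g P) ∧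
      (∀ P, P.conjTranspose = P → (∀ i j, P i j ∈ S₀) → g P = (sfun P).re) ∧
      (∀ P ∈ S.pos n, 0 ≤ g P) := by
  classical
  letI : Module ℝ (Matrix (Fin n) (Fin n) V) :=
    Module.compHom (Matrix (Fin n) (Fin n) V) (algebraMap ℝ ℂ)
  have hsmul : ∀ (r : ℝ) (P : Matrix (Fin n) (Fin n) V), r • P = (r : ℂ) • P :=
    fun _ _ => rfl
  set X := Matrix (Fin n) (Fin n) V with hX
  -- the hermitian real subspace
  let Herm : Submodule ℝ X :=
    { carrier := {P | P.conjTranspose = P}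
      add_mem' := by
        intro a b ha hb
        simp only [Set.mem_setOf_eq] at *
        rw [Matrix.conjTranspose_add, ha, hb]
      zero_mem' := by
        simp only [Set.mem_setOf_eq, Matrix.conjTranspose_zero]
      smul_mem' := by
        intro c P hP
        simp only [Set.mem_setOf_eq] at *
        rw [hsmul, Matrix.conjTranspose_smul, hP, Complex.star_def, Complex.conj_ofReal] }
  -- the positive cone inside it
  let cone : ConvexCone ℝ Herm :=
    { carrier := {P | (P : X) ∈ S.pos n}
      smul_mem' := by
        intro c hc P hP
        simp only [Set.mem_setOf_eq] at *
        show ((c • P : Herm) : X) ∈ S.pos n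
        rw [Submodule.coe_smul, hsmul]
        exact S.pos_smul c hc.le hP
      add_mem' := by
        intro a ha b hb
        simp only [Set.mem_setOf_eq] at *
        rw [Submodule.coe_add]
        exact S.pos_add ha hb }
  -- the domain : hermitian matrices with entries in S₀
  let D : Submodule ℝ Herm :=
    { carrier := {P | ∀ i j, (P : X) i j ∈ S₀}
      add_mem' := by
        intro a b ha hb i j
        rw [Submodule.coe_add, Matrix.add_apply]
        exact S₀.add_mem (ha i j) (hb i j)
      zero_mem' := by
        intro i j
        simp only [Submodule.coe_zero, Matrix.zero_apply]
        exact S₀.zero_mem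
      smul_mem' := by
        intro c P hP i j
        rw [Submodule.coe_smul, hsmul, Matrix.smul_apply]
        exact S₀.smul_mem _ (hP i j) }
  let f : D →ₗ[ℝ] ℝ :=
    { toFun := fun P => (sfun ((P : Herm) : X)).re
      map_add' := by
        intro a b
        show (sfun (((a + b : D) : Herm) : X)).re = _
        have h1 : (((a + b : D) : Herm) : X) = ((a : Herm) : X) + ((b : Herm) : X) := rfl
        rw [h1, map_add, Complex.add_re]
      map_smul' := by
        intro r P
        show (sfun (((r • P : D) : Herm) : X)).re = _
        have h1 : (((r • P : D) : Herm) : X) = (r : ℂ) • ((P : Herm) : X) := rfl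
        rw [h1, map_smul]
        simp [Complex.mul_re] }
  have nonneg : ∀ x : (LinearPMap.mk D f).domain, (x : Herm) ∈ cone → 0 ≤ (LinearPMap.mk D f) x := by
    intro x hx
    exact hpos _ x.2 hx
  have dense : ∀ y : Herm, ∃ x : (LinearPMap.mk D f).domain, (x : Herm) + y ∈ cone := by
    intro y
    obtain ⟨r, hr, hp⟩ := S.orderUnit (n := n) (y : X) y.2
    have hUh : ((r : ℂ) • unitMat S.unit n).conjTranspose = (r : ℂ) • unitMat S.unit n := by
      rw [Matrix.conjTranspose_smul, unitMat_herm, Complex.star_def, Complex.conj_ofReal]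
    have hUD : ∀ i j, ((r : ℂ) • unitMat S.unit n) i j ∈ S₀ := by
      intro i j
      rw [Matrix.smul_apply]
      by_cases h : i = j
      · subst h; simp only [unitMat, Matrix.of_apply, if_pos rfl]
        exact S₀.smul_mem _ hunit
      · simp only [unitMat, Matrix.of_apply, if_neg h, smul_zero]
        exact S₀.zero_mem
    refine ⟨⟨⟨(r : ℂ) • unitMat S.unit n, hUh⟩, hUD⟩, ?_⟩
    show ((⟨(r : ℂ) • unitMat S.unit n, hUh⟩ : Herm) + y : Herm) ∈ cone
    have : (((⟨(r : ℂ) • unitMat S.unit n, hUh⟩ : Herm) + y : Herm) : X)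
        = (r : ℂ) • unitMat S.unit n + (y : X) := rfl
    show ((((⟨(r : ℂ) • unitMat S.unit n, hUh⟩ : Herm) + y : Herm)) : X) ∈ S.pos n
    rw [this]
    exact hp
  have hpt : cone.Pointed := by
    show ((0 : Herm) : X) ∈ S.pos n
    have h0 := S.pos_smul 0 le_rfl (S.unit_pos n)
    simpa using h0
  obtain ⟨G, hG1, hG2⟩ := riesz_extension (cone.toPointedCone hpt) (LinearPMap.mk D f) nonneg dense
  refine ⟨fun P => if h : P.conjTranspose = P then G ⟨P, h⟩ else 0, ?_, ?_, ?_, ?_⟩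
  · intro P Q hP hQ
    beta_reduce
    have hPQ : (P + Q).conjTranspose = P + Q := by
      rw [Matrix.conjTranspose_add, hP, hQ]
    rw [dif_pos hP, dif_pos hQ, dif_pos hPQ]
    have h2 : (⟨P + Q, hPQ⟩ : Herm) = ⟨P, hP⟩ + ⟨Q, hQ⟩ := rfl
    rw [h2, map_add]
  · intro r P hP
    have hrP : ((r : ℂ) • P).conjTranspose = (r : ℂ) • P := by
      rw [Matrix.conjTranspose_smul, hP, Complex.star_def, Complex.conj_ofReal]
    beta_reduce
    rw [dif_pos hP, dif_pos hrP]
    have : (⟨(r : ℂ) • P, hrP⟩ : Herm) = r • ⟨P, hP⟩ := by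
      apply Subtype.ext
      rw [Submodule.coe_smul, hsmul]
    rw [this, map_smul, smul_eq_mul]
  · intro P hP hPD
    beta_reduce
    rw [dif_pos hP]
    exact hG1 ⟨⟨P, hP⟩, hPD⟩
  · intro P hPpos
    have hP : P.conjTranspose = P := S.pos_sa hPpos
    beta_reduce
    rw [dif_pos hP]
    exact hG2 ⟨P, hP⟩ hPpos

end Statement6Aux5
noncomputable section Statement6Aux6
set_option linter.unusedSectionVars false
set_option maxHeartbeats 1000000

variable {V : Type} [AddCommGroup V] [Module ℂ V] [StarAddMonoid V] [StarModule ℂ V]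

def rePart {n : ℕ} (P : Matrix (Fin n) (Fin n) V) : Matrix (Fin n) (Fin n) V :=
  (1/2 : ℂ) • (P + P.conjTranspose)

def imPart {n : ℕ} (P : Matrix (Fin n) (Fin n) V) : Matrix (Fin n) (Fin n) V :=
  (Complex.I/2 : ℂ) • (P.conjTranspose - P)

lemma star_half : star (1/2 : ℂ) = (1/2 : ℂ) := by
  simp [Complex.star_def, map_div₀]

lemma star_halfI : star (Complex.I/2 : ℂ) = -(Complex.I/2 : ℂ) := by
  simp [Complex.star_def, map_div₀, Complex.conj_I, neg_div]

lemma rePart_herm {n : ℕ} (P : Matrix (Fin n) (Fin n) V) :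
    (rePart P).conjTranspose = rePart P := by
  unfold rePart
  rw [Matrix.conjTranspose_smul, Matrix.conjTranspose_add, Matrix.conjTranspose_conjTranspose,
    star_half, add_comm]

lemma imPart_herm {n : ℕ} (P : Matrix (Fin n) (Fin n) V) :
    (imPart P).conjTranspose = imPart P := by
  unfold imPart
  rw [Matrix.conjTranspose_smul, Matrix.conjTranspose_sub, Matrix.conjTranspose_conjTranspose,
    star_halfI]
  module

lemma rePart_herm_eq {n : ℕ} {P : Matrix (Fin n) (Fin n) V} (hP : P.conjTranspose = P) :
    rePart P = P := by
  unfold rePart; rw [hP]; module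

lemma imPart_herm_eq {n : ℕ} {P : Matrix (Fin n) (Fin n) V} (hP : P.conjTranspose = P) :
    imPart P = 0 := by
  unfold imPart; rw [hP]; module

lemma rePart_add {n : ℕ} (P Q : Matrix (Fin n) (Fin n) V) :
    rePart (P + Q) = rePart P + rePart Q := by
  unfold rePart; rw [Matrix.conjTranspose_add]; module

lemma imPart_add {n : ℕ} (P Q : Matrix (Fin n) (Fin n) V) :
    imPart (P + Q) = imPart P + imPart Q := by
  unfold imPart; rw [Matrix.conjTranspose_add]; module

lemma rePart_conjT {n : ℕ} (P : Matrix (Fin n) (Fin n) V) :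
    rePart P.conjTranspose = rePart P := by
  unfold rePart; rw [Matrix.conjTranspose_conjTranspose]; module

lemma imPart_conjT {n : ℕ} (P : Matrix (Fin n) (Fin n) V) :
    imPart P.conjTranspose = -imPart P := by
  unfold imPart; rw [Matrix.conjTranspose_conjTranspose]; module

lemma rePart_smul {n : ℕ} (c : ℂ) (P : Matrix (Fin n) (Fin n) V) :
    rePart (c • P) = (c.re : ℂ) • rePart P + ((-c.im : ℝ) : ℂ) • imPart P := by
  unfold rePart imPart
  rw [Matrix.conjTranspose_smul]
  set a := c.re with ha
  set b := c.im with hb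
  have hc : c = (a : ℂ) + (b : ℂ) * Complex.I := (Complex.re_add_im c).symm
  have hcs : star c = (a : ℂ) - (b : ℂ) * Complex.I := by
    rw [Complex.star_def]
    apply Complex.ext <;> simp [ha, hb]
  rw [hcs, hc]
  match_scalars
  · push_cast; ring
  · push_cast; ring

lemma imPart_smul {n : ℕ} (c : ℂ) (P : Matrix (Fin n) (Fin n) V) :
    imPart (c • P) = (c.re : ℂ) • imPart P + ((c.im : ℝ) : ℂ) • rePart P := by
  unfold rePart imPart
  rw [Matrix.conjTranspose_smul]
  set a := c.re with ha
  set b := c.im with hb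
  have hc : c = (a : ℂ) + (b : ℂ) * Complex.I := (Complex.re_add_im c).symm
  have hcs : star c = (a : ℂ) - (b : ℂ) * Complex.I := by
    rw [Complex.star_def]
    apply Complex.ext <;> simp [ha, hb]
  rw [hcs, hc]
  match_scalars
  · push_cast
    linear_combination (-(b : ℂ)/2) * Complex.I_sq
  · push_cast
    linear_combination (-(b : ℂ)/2) * Complex.I_sq

/-- The single-entry linear map. -/
def singleL {n : ℕ} (p q : Fin n) : V →ₗ[ℂ] Matrix (Fin n) (Fin n) V where
  toFun v := Matrix.single p q v
  map_add' a b := Matrix.single_add p q a b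
  map_smul' c a := (Matrix.smul_single c p q a).symm

lemma singleL_eq {n : ℕ} (p q : Fin n) (w : V) :
    singleL p q w = Matrix.single p q w := rfl

lemma singleL_conjT {n : ℕ} (p q : Fin n) (v : V) :
    (singleL p q v).conjTranspose = singleL q p (star v) := by
  ext i j
  simp only [singleL, LinearMap.coe_mk, AddHom.coe_mk, Matrix.conjTranspose_apply,
    Matrix.single, Matrix.of_apply]
  by_cases h1 : q = i <;> by_cases h2 : p = j <;> simp [h1, h2, and_comm]

end Statement6Aux6
noncomputable section Statement6Aux7
set_option linter.unusedSectionVars false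
set_option maxHeartbeats 1000000

variable {V : Type} [AddCommGroup V] [Module ℂ V] [StarAddMonoid V] [StarModule ℂ V]

lemma herm_real_smul {n : ℕ} (r : ℝ) {P : Matrix (Fin n) (Fin n) V}
    (hP : P.conjTranspose = P) : ((r : ℂ) • P).conjTranspose = (r : ℂ) • P := by
  rw [Matrix.conjTranspose_smul, hP, Complex.star_def, Complex.conj_ofReal]

/-- Build the complex-linear functional from the real functional `g`. -/
lemma build_SS {n : ℕ} (g : Matrix (Fin n) (Fin n) V → ℝ)
    (gadd : ∀ P Q, P.conjTranspose = P → Q.conjTranspose = Q → g (P + Q) = g P + g Q)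
    (gsmul : ∀ (r : ℝ) (P), P.conjTranspose = P → g ((r : ℂ) • P) = r * g P) :
    ∃ SS : Matrix (Fin n) (Fin n) V →ₗ[ℂ] ℂ,
      ∀ P, SS P = ((g (rePart P) : ℝ) : ℂ) + Complex.I * ((g (imPart P) : ℝ) : ℂ) := by
  refine ⟨{ toFun := fun P => ((g (rePart P) : ℝ) : ℂ) + Complex.I * ((g (imPart P) : ℝ) : ℂ)
            map_add' := ?_
            map_smul' := ?_ }, fun P => rfl⟩
  · intro P Q
    rw [rePart_add, imPart_add, gadd _ _ (rePart_herm P) (rePart_herm Q),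
      gadd _ _ (imPart_herm P) (imPart_herm Q)]
    push_cast
    ring
  · intro c P
    rw [rePart_smul, imPart_smul,
      gadd _ _ (herm_real_smul _ (rePart_herm P)) (herm_real_smul _ (imPart_herm P)),
      gadd _ _ (herm_real_smul _ (imPart_herm P)) (herm_real_smul _ (rePart_herm P)),
      gsmul _ _ (rePart_herm P), gsmul _ _ (imPart_herm P),
      gsmul _ _ (imPart_herm P), gsmul _ _ (rePart_herm P)]
    rw [RingHom.id_apply, smul_eq_mul]
    apply Complex.ext <;>
      simp [Complex.mul_re, Complex.mul_im, Complex.add_re, Complex.add_im] <;> ring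

lemma SS_herm_eq {n : ℕ} (g : Matrix (Fin n) (Fin n) V → ℝ)
    (gsmul : ∀ (r : ℝ) (P), P.conjTranspose = P → g ((r : ℂ) • P) = r * g P)
    (SS : Matrix (Fin n) (Fin n) V →ₗ[ℂ] ℂ)
    (hSS : ∀ P, SS P = ((g (rePart P) : ℝ) : ℂ) + Complex.I * ((g (imPart P) : ℝ) : ℂ))
    {P : Matrix (Fin n) (Fin n) V} (hP : P.conjTranspose = P) :
    SS P = ((g P : ℝ) : ℂ) := by
  have hg0 : g 0 = 0 := by
    have := gsmul 0 0 (by simp)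
    simpa using this
  rw [hSS, rePart_herm_eq hP, imPart_herm_eq hP, hg0]
  simp

lemma SS_conjT {n : ℕ} (g : Matrix (Fin n) (Fin n) V → ℝ)
    (gsmul : ∀ (r : ℝ) (P), P.conjTranspose = P → g ((r : ℂ) • P) = r * g P)
    (SS : Matrix (Fin n) (Fin n) V →ₗ[ℂ] ℂ)
    (hSS : ∀ P, SS P = ((g (rePart P) : ℝ) : ℂ) + Complex.I * ((g (imPart P) : ℝ) : ℂ))
    (P : Matrix (Fin n) (Fin n) V) :
    SS P.conjTranspose = starRingEnd ℂ (SS P) := by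
  have hneg : g (-imPart P) = -g (imPart P) := by
    have h1 : ((-1 : ℝ) : ℂ) • imPart P = -imPart P := by push_cast; module
    have := gsmul (-1) (imPart P) (imPart_herm P)
    rw [h1] at this
    rw [this]; ring
  rw [hSS, hSS, rePart_conjT, imPart_conjT, hneg]
  apply Complex.ext <;> simp

lemma sum_dual_single {n : ℕ} (F : Fin n → Fin n → Module.Dual ℂ V) (p q : Fin n) (w : V) :
    ∑ i, ∑ j, F i j (Matrix.single p q w i j) = F p q w := by
  rw [Finset.sum_eq_single p]
  · rw [Finset.sum_eq_single q]
    · simp [Matrix.single]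
    · intro b _ hb; simp [Matrix.single, Ne.symm hb]
    · simp
  · intro b _ hb
    apply Finset.sum_eq_zero
    intro x _
    simp [Matrix.single, Ne.symm hb]
  · simp

end Statement6Aux7
noncomputable section Statement6Aux8
set_option linter.unusedSectionVars false
set_option maxHeartbeats 1000000

variable {V : Type} [AddCommGroup V] [Module ℂ V] [StarAddMonoid V] [StarModule ℂ V]

lemma stdBasisMatrix_mem {S₀ : Submodule ℂ V} {w : V} (hw : w ∈ S₀) {n : ℕ}
    (p q i j : Fin n) : Matrix.single p q w i j ∈ S₀ := by
  unfold Matrix.single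
  rw [Matrix.of_apply]
  split_ifs
  · exact hw
  · exact S₀.zero_mem

lemma exact_lift (S : OSStruct V) (S₀ : Submodule ℂ V)
    (hunit : S.unit ∈ S₀) (hstar : ∀ v ∈ S₀, star v ∈ S₀) {n : ℕ}
    (N : Matrix (Fin n) (Fin n) (Module.Dual ℂ S₀))
    (hN : CPIntoMat (osSubCone S.pos S₀) (matValued N)) :
    ∃ M : Matrix (Fin n) (Fin n) (Module.Dual ℂ V),
      CPIntoMat S.pos (matValued M) ∧ ∀ (p q : Fin n) (v : S₀), M p q (v : V) = N p q v := by
  classical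
  have hsurj : Function.Surjective (S₀.subtype.dualMap) :=
    LinearMap.dualMap_surjective_of_injective S₀.injective_subtype
  choose NT hNT using fun pq : Fin n × Fin n => hsurj (N pq.1 pq.2)
  have hNTv : ∀ (p q : Fin n) (v : S₀), NT (p, q) (v : V) = N p q v := by
    intro p q v
    have := LinearMap.congr_fun (hNT (p, q)) v
    rwa [LinearMap.dualMap_apply] at this
  let sfun : Matrix (Fin n) (Fin n) V →ₗ[ℂ] ℂ :=
    { toFun := fun P => ∑ p, ∑ q, NT (p, q) (P p q)
      map_add' := by
        intro a b
        simp [Matrix.add_apply, Finset.sum_add_distrib]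
      map_smul' := by
        intro c a
        simp [Matrix.smul_apply, Finset.mul_sum, smul_eq_mul] }
  have hsfun_single : ∀ (p q : Fin n) (w : V), sfun (Matrix.single p q w) = NT (p, q) w := by
    intro p q w
    show ∑ i, ∑ j, NT (i, j) (Matrix.single p q w i j) = NT (p, q) w
    exact sum_dual_single (fun i j => NT (i, j)) p q w
  have hpos : ∀ P : Matrix (Fin n) (Fin n) V, (∀ i j, P i j ∈ S₀) → P ∈ S.pos n →
      0 ≤ (sfun P).re := by
    intro P hPS hPpos
    have hQ : (Matrix.of fun i j => (⟨P i j, hPS i j⟩ : S₀)) ∈ osSubCone S.pos S₀ n := by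
      show mmap S₀.subtype _ ∈ S.pos n
      convert hPpos using 1
      ext i j; rfl
    have hge := sum_dual_nonneg S N hN _ hQ
    have heq : sfun P = ∑ i, ∑ j, N i j ((Matrix.of fun i j => (⟨P i j, hPS i j⟩ : S₀)) i j) := by
      show (∑ p, ∑ q, NT (p, q) (P p q)) = _
      refine Finset.sum_congr rfl fun p _ => Finset.sum_congr rfl fun q _ => ?_
      rw [Matrix.of_apply]
      exact hNTv p q ⟨P p q, hPS p q⟩
    rw [Complex.le_def] at hge
    rw [heq]
    simpa using hge.1
  obtain ⟨g, gadd, gsmul, gext, gpos⟩ := riesz_for_os S S₀ hunit n sfun hpos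
  obtain ⟨SS, hSS⟩ := build_SS g gadd gsmul
  refine ⟨Matrix.of fun p q => SS ∘ₗ singleL p q, ?_, ?_⟩
  · intro k M0 hM0
    have hM0h := S.pos_sa hM0
    refine Matrix.PosSemidef.of_dotProduct_mulVec_nonneg ?_ ?_
    · show (blockify (mmap (matValued _) M0)).conjTranspose = _
      ext a b
      rw [Matrix.conjTranspose_apply]
      show starRingEnd ℂ (SS (singleL b.2 a.2 (M0 b.1 a.1))) = SS (singleL a.2 b.2 (M0 a.1 b.1))
      have hstarM : star (M0 b.1 a.1) = M0 a.1 b.1 := by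
        have := congrFun (congrFun hM0h a.1) b.1
        rwa [Matrix.conjTranspose_apply] at this
      rw [← SS_conjT g gsmul SS hSS, singleL_conjT, hstarM]
    · intro ξ
      rw [quad_eq]
      set C := matCongr (Matrix.of fun i r => ξ (i, r)) M0 with hC
      have hCpos : C ∈ S.pos n := S.pos_congr _ hM0
      have h1 : (∑ p, ∑ q, (matValued (Matrix.of fun p q => SS ∘ₗ singleL p q) (C p q)) p q)
          = SS C := by
        calc ∑ p, ∑ q, (matValued (Matrix.of fun p q => SS ∘ₗ singleL p q) (C p q)) p q
            = ∑ p, ∑ q, SS (Matrix.single p q (C p q)) := rfl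
          _ = SS (∑ p, ∑ q, Matrix.single p q (C p q)) := by
              rw [map_sum]
              exact Finset.sum_congr rfl fun p _ => (map_sum SS _ Finset.univ).symm
          _ = SS C := by rw [← Matrix.matrix_eq_sum_single]
      rw [h1, SS_herm_eq g gsmul SS hSS (S.pos_sa hCpos)]
      exact Complex.zero_le_real.mpr (gpos C hCpos)
  · intro p q v
    show SS (singleL p q (v : V)) = N p q v
    obtain ⟨z, hz⟩ : ∃ z, N p q v = z := ⟨_, rfl⟩
    obtain ⟨x, hx⟩ : ∃ x, z.re = x := ⟨_, rfl⟩
    obtain ⟨y, hy⟩ : ∃ y, z.im = y := ⟨_, rfl⟩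
    have hzz : z = (x : ℂ) + (y : ℂ) * Complex.I := by
      rw [← hx, ← hy, Complex.re_add_im]
    have hcz : starRingEnd ℂ z = (x : ℂ) - (y : ℂ) * Complex.I := by
      apply Complex.ext <;> simp [← hx, ← hy]
    have hre : rePart (singleL p q (v : V))
        = (1/2 : ℂ) • (singleL p q (v : V) + singleL q p (star (v : V))) := by
      unfold rePart
      rw [singleL_conjT]
    have him : imPart (singleL p q (v : V))
        = (Complex.I/2 : ℂ) • (singleL q p (star (v : V)) - singleL p q (v : V)) := by
      unfold imPart
      rw [singleL_conjT]
    have hmem1 : ∀ i j, singleL p q (v : V) i j ∈ S₀ := fun i j =>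
      stdBasisMatrix_mem v.2 p q i j
    have hmem2 : ∀ i j, singleL q p (star (v : V)) i j ∈ S₀ := fun i j =>
      stdBasisMatrix_mem (hstar _ v.2) q p i j
    have hreS : ∀ i j, (rePart (singleL p q (v : V))) i j ∈ S₀ := by
      intro i j
      rw [hre, Matrix.smul_apply, Matrix.add_apply]
      exact S₀.smul_mem _ (S₀.add_mem (hmem1 i j) (hmem2 i j))
    have himS : ∀ i j, (imPart (singleL p q (v : V))) i j ∈ S₀ := by
      intro i j
      rw [him, Matrix.smul_apply, Matrix.sub_apply]
      exact S₀.smul_mem _ (S₀.sub_mem (hmem2 i j) (hmem1 i j))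
    have hNT1 : NT (p, q) (v : V) = z := by rw [hNTv p q v, hz]
    have hNT2 : NT (q, p) (star (v : V)) = starRingEnd ℂ z := by
      have h2 := matValued_starpres S hunit hstar N hN v p q
      have h3 : NT (q, p) (star (v : V)) = N q p ⟨star (v : V), hstar _ v.2⟩ :=
        hNTv q p ⟨star (v : V), hstar _ v.2⟩
      rw [h3, h2, hz]
    have e1 : sfun (rePart (singleL p q (v : V))) = (x : ℂ) := by
      rw [hre, map_smul, map_add, singleL_eq, singleL_eq, hsfun_single, hsfun_single,
        hNT1, hNT2, hcz, hzz, smul_eq_mul]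
      ring
    have e2 : sfun (imPart (singleL p q (v : V))) = (y : ℂ) := by
      rw [him, map_smul, map_sub, singleL_eq, singleL_eq, hsfun_single, hsfun_single,
        hNT1, hNT2, hcz, hzz, smul_eq_mul]
      linear_combination (-(y : ℂ)) * Complex.I_sq
    have gre : g (rePart (singleL p q (v : V))) = x := by
      rw [gext _ (rePart_herm _) hreS, e1, Complex.ofReal_re]
    have gim : g (imPart (singleL p q (v : V))) = y := by
      rw [gext _ (imPart_herm _) himS, e2, Complex.ofReal_re]
    rw [hSS, gre, gim, hz, hzz]
    ring

end Statement6Aux8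
noncomputable section Statement6Aux9
set_option linter.unusedSectionVars false
set_option maxHeartbeats 1000000

variable {V : Type} [AddCommGroup V] [Module ℂ V] [StarAddMonoid V] [StarModule ℂ V]

lemma CPIntoMat_add {n : ℕ} (C : ConeFam V) (φ ψ : V →ₗ[ℂ] Matrix (Fin n) (Fin n) ℂ)
    (hφ : CPIntoMat C φ) (hψ : CPIntoMat C ψ) : CPIntoMat C (φ + ψ) := by
  intro k M hM
  have h1 := hφ k M hM
  have h2 := hψ k M hM
  have heq : blockify (mmap (φ + ψ) M) = blockify (mmap φ M) + blockify (mmap ψ M) := by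
    ext a b; rfl
  rw [heq]
  refine Matrix.PosSemidef.of_dotProduct_mulVec_nonneg (h1.1.add h2.1) fun x => ?_
  rw [Matrix.add_mulVec, dotProduct_add]
  exact add_nonneg (h1.dotProduct_mulVec_nonneg x) (h2.dotProduct_mulVec_nonneg x)

lemma CP_scaled_unit (S : OSStruct V) (δ : Module.Dual ℂ V)
    (hδpos : ∀ v, posElem S.pos v → 0 ≤ δ v)
    (hδstar : ∀ v, δ (star v) = starRingEnd ℂ (δ v))
    {ε : ℝ} (hε : 0 ≤ ε) (n : ℕ) :
    CPIntoMat S.pos (matValued ((ε : ℂ) • unitMat δ n)) := by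
  have hent : ∀ (p q : Fin n) (w : V),
      (((ε : ℂ) • unitMat δ n) p q) w = if p = q then (ε : ℂ) * δ w else 0 := by
    intro p q w
    show ((ε : ℂ) • (unitMat δ n p q)) w = _
    rw [LinearMap.smul_apply, smul_eq_mul]
    unfold unitMat
    rw [Matrix.of_apply]
    split_ifs
    · rfl
    · simp
  intro k M hM
  have hMh := S.pos_sa hM
  refine Matrix.PosSemidef.of_dotProduct_mulVec_nonneg ?_ ?_
  · ext a b
    rw [Matrix.conjTranspose_apply]
    show star ((((ε : ℂ) • unitMat δ n) b.2 a.2) (M b.1 a.1))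
        = (((ε : ℂ) • unitMat δ n) a.2 b.2) (M a.1 b.1)
    have hstarM : star (M b.1 a.1) = M a.1 b.1 := by
      have := congrFun (congrFun hMh a.1) b.1
      rwa [Matrix.conjTranspose_apply] at this
    rw [hent, hent]
    by_cases h : a.2 = b.2
    · rw [if_pos h.symm, if_pos h]
      show starRingEnd ℂ ((ε : ℂ) * δ (M b.1 a.1)) = _
      rw [map_mul, Complex.conj_ofReal, ← hδstar, hstarM]
    · rw [if_neg (fun hh => h hh.symm), if_neg h, star_zero]
  · intro ξ
    rw [quad_eq]
    set C := matCongr (Matrix.of fun i r => ξ (i, r)) M with hC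
    have hCpos : C ∈ S.pos n := S.pos_congr _ hM
    have h1 : ∀ p q : Fin n, (matValued ((ε : ℂ) • unitMat δ n) (C p q)) p q
        = if p = q then (ε : ℂ) * δ (C p q) else 0 := fun p q => hent p q (C p q)
    calc (0 : ℂ) ≤ ∑ p : Fin n, (ε : ℂ) * δ (C p p) := by
          refine Finset.sum_nonneg fun p _ => ?_
          refine mul_nonneg (Complex.zero_le_real.mpr hε) ?_
          exact hδpos _ (posElem_diag S hCpos p)
      _ = ∑ p, ∑ q, (matValued ((ε : ℂ) • unitMat δ n) (C p q)) p q := by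
          refine (Finset.sum_congr rfl fun p _ => ?_).symm
          rw [Finset.sum_eq_single p]
          · rw [h1, if_pos rfl]
          · intro b _ hb; rw [h1, if_neg (Ne.symm hb)]
          · simp

lemma pos_star_self (S : OSStruct V) {w : V} (hw : posElem S.pos w) : star w = w := by
  have := S.pos_sa hw
  have h2 := congrFun (congrFun this (0 : Fin 1)) (0 : Fin 1)
  rwa [Matrix.conjTranspose_apply] at h2

end Statement6Aux9
/-- The adjoint of the inclusion of an operator subsystem of a finite
dimensional operator system is a quotient map whose kernel is a null subspace of the dual. -/
theorem statement6 {V : Type} [AddCommGroup V] [Module ℂ V] [StarAddMonoid V] [StarModule ℂ V] [FiniteDimensional ℂ V]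
    (S : OSStruct V) (S₀ : Submodule ℂ V) (hunit : S.unit ∈ S₀)
    (hstar : ∀ v ∈ S₀, star v ∈ S₀)
    (δ : Module.Dual ℂ V) (hδ : osFaithfulState S.pos S.unit δ) :
    osQuotientMap (osDualCone S.pos) (osDualCone (osSubCone S.pos S₀))
        (S₀.subtype.dualMap δ) S₀.subtype.dualMap ∧
      (∀ g ∈ LinearMap.ker S₀.subtype.dualMap, dstar g ∈ LinearMap.ker S₀.subtype.dualMap) ∧
      (∀ g ∈ LinearMap.ker S₀.subtype.dualMap,
        (∀ v, posElem S.pos v → 0 ≤ g v) → g = 0) := by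
  have hδpos : ∀ v, posElem S.pos v → 0 ≤ δ v := hδ.1.2
  have hδstar := pos_functional_star S δ hδpos
  have hker : ∀ gg ∈ LinearMap.ker S₀.subtype.dualMap, ∀ x : S₀, gg (x : V) = 0 := by
    intro gg hgg x
    have h0 := LinearMap.mem_ker.mp hgg
    have := LinearMap.congr_fun h0 x
    rwa [LinearMap.dualMap_apply, LinearMap.zero_apply] at this
  refine ⟨⟨?_, ?_, ?_⟩, ?_, ?_⟩
  · -- surjectivity
    exact LinearMap.dualMap_surjective_of_injective S₀.injective_subtype
  · -- complete positivity
    intro k F hF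
    show CPIntoMat (osSubCone S.pos S₀) (matValued (mmap S₀.subtype.dualMap F))
    intro m M hM
    have heq : blockify (mmap (matValued (mmap S₀.subtype.dualMap F)) M)
        = blockify (mmap (matValued F) (mmap S₀.subtype M)) := by
      ext a b; rfl
    rw [heq]
    exact hF m _ hM
  · -- quotient lifting
    intro n N hN ε hε
    obtain ⟨Mlift, hCP, hres⟩ := exact_lift S S₀ hunit hstar N hN
    refine ⟨Mlift + (ε : ℂ) • unitMat δ n, ?_, ?_⟩
    · show CPIntoMat S.pos (matValued (Mlift + (ε : ℂ) • unitMat δ n))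
      have heq : matValued (Mlift + (ε : ℂ) • unitMat δ n)
          = matValued Mlift + matValued ((ε : ℂ) • unitMat δ n) := by
        apply LinearMap.ext
        intro v
        ext i j
        rfl
      rw [heq]
      exact CPIntoMat_add _ _ _ hCP (CP_scaled_unit S δ hδpos hδstar hε.le n)
    · apply Matrix.ext
      intro p q
      apply LinearMap.ext
      intro v
      show ((Mlift + (ε : ℂ) • unitMat δ n) p q) (v : V)
          = (N p q) v + ((ε : ℂ) • unitMat (S₀.subtype.dualMap δ) n) p q v
      rw [Matrix.add_apply, LinearMap.add_apply, hres p q v]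
      congr 1
      show ((ε : ℂ) • (unitMat δ n p q)) (v : V) = ((ε : ℂ) • (unitMat (S₀.subtype.dualMap δ) n p q)) v
      rw [LinearMap.smul_apply, LinearMap.smul_apply]
      congr 1
      unfold unitMat
      rw [Matrix.of_apply, Matrix.of_apply]
      split_ifs
      · rfl
      · rfl
  · -- kernel is star closed
    intro gg hgg
    rw [LinearMap.mem_ker]
    apply LinearMap.ext
    intro x
    rw [LinearMap.dualMap_apply, LinearMap.zero_apply]
    show starRingEnd ℂ (gg (star (x : V))) = 0
    rw [show gg (star (x : V)) = 0 from hker gg hgg ⟨star (x : V), hstar _ x.2⟩, map_zero]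
  · -- kernel is null
    intro gg hgg hggpos
    have hge : gg S.unit = 0 := hker gg hgg ⟨S.unit, hunit⟩
    have hposzero : ∀ w, posElem S.pos w → gg w = 0 := by
      intro w hw
      have h1 : 0 ≤ gg w := hggpos w hw
      have hwh : star w = w := pos_star_self S hw
      obtain ⟨r, hr, hp⟩ := posElem_orderUnit S (h := -w) (by rw [star_neg, hwh])
      have h3 : 0 ≤ gg ((r : ℂ) • S.unit + -w) := hggpos _ hp
      rw [map_add, map_smul, hge, smul_zero, zero_add, map_neg] at h3
      exact le_antisymm (neg_nonneg.mp h3) h1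
    have hherm : ∀ w, star w = w → gg w = 0 := by
      intro w hwh
      obtain ⟨r, hr, hp⟩ := posElem_orderUnit S hwh
      have h5 := hposzero _ hp
      have h6 : gg ((r : ℂ) • S.unit) = 0 := by
        rw [map_smul, hge, smul_zero]
      rw [map_add, h6, zero_add] at h5
      exact h5
    apply LinearMap.ext
    intro v
    obtain ⟨h, k, hh, hk, hv, -, -, -⟩ := herm_decomp v
    rw [LinearMap.zero_apply, hv, map_add, map_smul, hherm h hh, hherm k hk, smul_zero, add_zero]
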